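/- For an integrable real random variable Z with continuous strictly increasing distribution function F and τ ∈ (0,1), the difference in expected pinball losses satisfies E[S(z, Z)] − E[S(q, Z)] = ∫ between q and z of (F(t) − τ) dt, where q = F⁻¹(τ); consequently q is the unique minimizer of z ↦ E[S(z, Z)]. -/

import Mathlib

open MeasureTheory

lemma maxsub (a b x : ℝ) (hab : a ≤ b) :
    (ENNReal.ofReal (b - max a x)).toReal = max (b - x) 0 - max (a - x) 0 := by
  rcases le_total x a with h | h
  · rw [max_eq_left h, ENNReal.toReal_ofReal (by linarith),
      max_eq_left (by linarith : (0:ℝ) ≤ b - x), max_eq_left (by linarith : (0:ℝ) ≤ a - x)]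
    ring
  · rw [max_eq_right h]
    rcases le_total x b with h2 | h2
    · rw [ENNReal.toReal_ofReal (by linarith), max_eq_left (by linarith : (0:ℝ) ≤ b - x),
        max_eq_right (by linarith : a - x ≤ 0)]
      ring
    · rw [ENNReal.ofReal_eq_zero.2 (by linarith), ENNReal.toReal_zero,
        max_eq_right (by linarith : b - x ≤ 0), max_eq_right (by linarith : a - x ≤ 0)]
      ring

lemma keyA (μ : Measure ℝ) [IsProbabilityMeasure μ] (F : ℝ → ℝ)
    (hF : ∀ t, F t = (μ (Set.Iic t)).toReal) (a b : ℝ) (hab : a ≤ b) :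
    ∫ x, (max (b - x) 0 - max (a - x) 0) ∂μ = ∫ t in a..b, F t := by
  have hmeas : Measurable (Function.uncurry fun x t : ℝ => if x ≤ t then (1:ℝ) else 0) := by
    exact Measurable.ite (measurableSet_le measurable_fst measurable_snd)
      measurable_const measurable_const
  have hint : Integrable (Function.uncurry fun x t : ℝ => if x ≤ t then (1:ℝ) else 0)
      (μ.prod (volume.restrict (Set.Ioc a b))) := by
    apply Integrable.mono' (integrable_const (1:ℝ)) hmeas.aestronglyMeasurable
    filter_upwards with p
    by_cases h : p.1 ≤ p.2 <;> simp [Function.uncurry, h]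
  have hswap := MeasureTheory.integral_integral_swap hint
  have hL : ∀ x : ℝ, (∫ t in Set.Ioc a b, if x ≤ t then (1:ℝ) else 0) =
      max (b - x) 0 - max (a - x) 0 := by
    intro x
    have : (fun t : ℝ => if x ≤ t then (1:ℝ) else 0) = (Set.Ici x).indicator (fun _ => 1) := by
      funext t; by_cases h : x ≤ t <;> simp [Set.indicator, h]
    rw [this, MeasureTheory.integral_indicator measurableSet_Ici,
      Measure.restrict_restrict measurableSet_Ici, MeasureTheory.setIntegral_const]
    have hvol : volume (Set.Ici x ∩ Set.Ioc a b) = ENNReal.ofReal (b - max a x) := by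
      apply le_antisymm
      · calc volume (Set.Ici x ∩ Set.Ioc a b) ≤ volume (Set.Icc (max a x) b) := by
              apply measure_mono
              rintro t ⟨h1, h2, h3⟩
              exact ⟨max_le (le_of_lt h2) h1, h3⟩
          _ = ENNReal.ofReal (b - max a x) := Real.volume_Icc
      · calc ENNReal.ofReal (b - max a x) = volume (Set.Ioc (max a x) b) := Real.volume_Ioc.symm
          _ ≤ volume (Set.Ici x ∩ Set.Ioc a b) := by
              apply measure_mono
              rintro t ⟨h1, h2⟩
              exact ⟨le_of_lt (lt_of_le_of_lt (le_max_right a x) h1),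
                lt_of_le_of_lt (le_max_left a x) h1, h2⟩
    rw [measureReal_def, hvol, smul_eq_mul, mul_one, maxsub a b x hab]
  have hR : ∀ t : ℝ, (∫ x, if x ≤ t then (1:ℝ) else 0 ∂μ) = F t := by
    intro t
    have : (fun x : ℝ => if x ≤ t then (1:ℝ) else 0) = (Set.Iic t).indicator (fun _ => 1) := by
      funext x; by_cases h : x ≤ t <;> simp [Set.indicator, h]
    rw [this, MeasureTheory.integral_indicator measurableSet_Iic,
      MeasureTheory.setIntegral_const, smul_eq_mul, mul_one, measureReal_def, hF t]
  calc ∫ x, (max (b - x) 0 - max (a - x) 0) ∂μ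
      = ∫ x, (∫ t in Set.Ioc a b, if x ≤ t then (1:ℝ) else 0) ∂μ := by
        exact integral_congr_ae (μ := μ) (Filter.Eventually.of_forall fun x => (hL x).symm)
    _ = ∫ t in Set.Ioc a b, (∫ x, (if x ≤ t then (1:ℝ) else 0) ∂μ) := hswap
    _ = ∫ t in Set.Ioc a b, F t := by
        exact integral_congr_ae (Filter.Eventually.of_forall fun t => hR t)
    _ = ∫ t in a..b, F t := (intervalIntegral.integral_of_le hab).symm

/-- Expected pinball loss difference equals the signed integral of F - τ between the
τ-quantile and the forecast; hence the quantile is the unique minimizer. -/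
theorem stmt_4 (μ : Measure ℝ) [IsProbabilityMeasure μ]
    (hZ : Integrable (fun x : ℝ => x) μ)
    (F : ℝ → ℝ) (hF : ∀ t, F t = (μ (Set.Iic t)).toReal)
    (hFc : Continuous F) (hFm : StrictMono F)
    (τ : ℝ) (hτ : τ ∈ Set.Ioo (0:ℝ) 1)
    (q : ℝ) (hq : F q = τ) :
    (∀ z : ℝ,
      (∫ x, ((if x ≤ z then (1:ℝ) else 0) - τ) * (z - x) ∂μ) -
        (∫ x, ((if x ≤ q then (1:ℝ) else 0) - τ) * (q - x) ∂μ) =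
        ∫ t in q..z, (F t - τ)) ∧
    (∀ z : ℝ, z ≠ q →
      (∫ x, ((if x ≤ q then (1:ℝ) else 0) - τ) * (q - x) ∂μ) <
        ∫ x, ((if x ≤ z then (1:ℝ) else 0) - τ) * (z - x) ∂μ) := by
  set m : ℝ := ∫ x, x ∂μ with hm
  have hlin : ∀ z : ℝ, Integrable (fun x => z - x) μ := fun z => (integrable_const z).sub hZ
  have hmax : ∀ z : ℝ, Integrable (fun x => max (z - x) 0) μ := fun z => (hlin z).pos_part
  have hpw : ∀ z x : ℝ, ((if x ≤ z then (1:ℝ) else 0) - τ) * (z - x)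
      = max (z - x) 0 - τ * (z - x) := by
    intro z x
    by_cases h : x ≤ z
    · rw [if_pos h, max_eq_left (by linarith : (0:ℝ) ≤ z - x)]; ring
    · rw [if_neg h, max_eq_right (by push_neg at h; linarith : z - x ≤ 0)]; ring
  have hlini : ∀ z : ℝ, ∫ x, (z - x) ∂μ = z - m := by
    intro z
    rw [integral_sub (integrable_const z) hZ, integral_const]
    simp [hm]
  have hg : ∀ z : ℝ, (∫ x, ((if x ≤ z then (1:ℝ) else 0) - τ) * (z - x) ∂μ)
      = (∫ x, max (z - x) 0 ∂μ) - τ * (z - m) := by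
    intro z
    have : (fun x => ((if x ≤ z then (1:ℝ) else 0) - τ) * (z - x))
        = fun x => max (z - x) 0 - τ * (z - x) := funext (hpw z)
    rw [this, integral_sub (hmax z) ((hlin z).const_mul τ), integral_const_mul, hlini]
  have hM : ∀ z : ℝ, (∫ x, max (z - x) 0 ∂μ) - (∫ x, max (q - x) 0 ∂μ)
      = ∫ t in q..z, F t := by
    intro z
    rcases le_total q z with h | h
    · rw [← keyA μ F hF q z h, integral_sub (hmax z) (hmax q)]
    · have := keyA μ F hF z q h
      rw [integral_sub (hmax q) (hmax z)] at this
      rw [intervalIntegral.integral_symm, ← this]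
      ring
  have hdiff : ∀ z : ℝ,
      (∫ x, ((if x ≤ z then (1:ℝ) else 0) - τ) * (z - x) ∂μ) -
        (∫ x, ((if x ≤ q then (1:ℝ) else 0) - τ) * (q - x) ∂μ) =
        ∫ t in q..z, (F t - τ) := by
    intro z
    rw [hg z, hg q, intervalIntegral.integral_sub (hFc.intervalIntegrable q z)
      intervalIntegrable_const, intervalIntegral.integral_const, ← hM z]
    simp only [smul_eq_mul]
    ring
  refine ⟨hdiff, fun z hz => ?_⟩
  have hpos : 0 < ∫ t in q..z, (F t - τ) := by
    rcases lt_or_gt_of_ne hz with h | h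
    · rw [intervalIntegral.integral_symm]
      have : 0 < ∫ t in z..q, (τ - F t) := by
        apply intervalIntegral.intervalIntegral_pos_of_pos_on
          ((continuous_const.sub hFc).intervalIntegrable z q)
          (fun t ht => by have := hFm ht.2; show (0:ℝ) < τ - F t; linarith [hq ▸ this]) h
      have heq : (∫ t in z..q, (τ - F t)) = -∫ t in z..q, (F t - τ) := by
        rw [← intervalIntegral.integral_neg]
        congr 1; funext t; ring
      linarith [heq ▸ this]
    · apply intervalIntegral.intervalIntegral_pos_of_pos_on
        ((hFc.sub continuous_const).intervalIntegrable q z)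
        (fun t ht => by have := hFm ht.1; show (0:ℝ) < F t - τ; linarith [hq ▸ this]) h
  linarith [hdiff z]
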